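/- arXiv:1606.01028 — 8 statements merged into one kernel-verified Lean document; each statement's English description precedes it below -/
import Mathlib

section
/- Every extreme point of the Individual Pieces Set IPS is the value vector a(X̂) of some integer allocation X̂. -/
/-- An allocation matrix: nonnegative entries, columns summing to 1. -/
def IsAlloc {m : ℕ} (X : Fin 3 → Fin m → ℝ) : Prop :=
  (∀ i j, 0 ≤ X i j) ∧ ∀ j, ∑ i, X i j = 1

/-- An integer allocation: entries in {0,1}, columns summing to 1. -/
def IsIntAlloc {m : ℕ} (X : Fin 3 → Fin m → ℝ) : Prop :=
  (∀ i j, X i j = 0 ∨ X i j = 1) ∧ ∀ j, ∑ i, X i j = 1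

/-- Value vector of an allocation. -/
def payoff {m : ℕ} (a X : Fin 3 → Fin m → ℝ) : Fin 3 → ℝ :=
  fun i => ∑ j, a i j * X i j

/-- Individual Pieces Set. -/
def IPS {m : ℕ} (a : Fin 3 → Fin m → ℝ) : Set (Fin 3 → ℝ) :=
  {v | ∃ X, IsAlloc X ∧ payoff a X = v}

theorem extremePoint_is_integer_allocation (m : ℕ) (a : Fin 3 → Fin m → ℝ)
    (ha : ∀ i j, 0 ≤ a i j) (hrow : ∀ i, ∑ j, a i j = 1) :
    ∀ v ∈ Set.extremePoints ℝ (IPS a), ∃ X, IsIntAlloc X ∧ payoff a X = v := by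
  intro v hv
  obtain ⟨hvIPS, hext⟩ := hv
  obtain ⟨X, ⟨hX0, hX1⟩, hXv⟩ := hvIPS
  -- Key: if two distinct players share good j, their valuations of j are 0.
  have key : ∀ (j : Fin m) (i1 i2 : Fin 3), i1 ≠ i2 → 0 < X i1 j → 0 < X i2 j →
      a i1 j = 0 ∧ a i2 j = 0 := by
    intro j i1 i2 hne h1 h2
    set ε := min (X i1 j) (X i2 j) with hεdef
    have hεpos : 0 < ε := lt_min h1 h2
    have hε1 : ε ≤ X i1 j := min_le_left _ _
    have hε2 : ε ≤ X i2 j := min_le_right _ _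
    set c : Fin 3 → ℝ := fun i => if i = i1 then ε else if i = i2 then -ε else 0 with hcdef
    set d : Fin 3 → Fin m → ℝ := fun i j' => if j' = j then c i else 0 with hddef
    have hcsum : ∑ i, c i = 0 := by
      have hfun : c = fun i => (if i = i1 then ε else 0) + (if i = i2 then -ε else 0) := by
        funext i
        by_cases hh1 : i = i1
        · simp [hcdef, hh1, if_neg hne]
        · by_cases hh2 : i = i2
          · simp [hcdef, hh1, hh2, (Ne.symm hne : ¬ i2 = i1)]
          · simp [hcdef, hh1, hh2]
      rw [hfun, Finset.sum_add_distrib]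
      simp
    have hdsum : ∀ j', ∑ i, d i j' = 0 := by
      intro j'
      by_cases hj : j' = j
      · subst hj; simpa [hddef] using hcsum
      · simp [hddef, hj]
    have hdb : ∀ i' j', |d i' j'| ≤ X i' j' := by
      intro i' j'
      by_cases hj : j' = j
      · by_cases hh1 : i' = i1
        · have hd : d i' j' = ε := by simp [hddef, hcdef, hj, hh1]
          rw [hd, abs_of_pos hεpos, hh1, hj]; exact hε1
        · by_cases hh2 : i' = i2
          · have hd : d i' j' = -ε := by
              simp [hddef, hcdef, hj, hh1, hh2, (Ne.symm hne : ¬ i2 = i1)]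
            rw [hd, abs_neg, abs_of_pos hεpos, hh2, hj]; exact hε2
          · have hd : d i' j' = 0 := by simp [hddef, hcdef, hj, hh1, hh2]
            rw [hd, abs_zero]; exact hX0 i' j'
      · have hd : d i' j' = 0 := by simp [hddef, hj]
        rw [hd, abs_zero]; exact hX0 i' j'
    have hpay : ∀ (s : ℝ) (i : Fin 3),
        payoff a (fun i' j' => X i' j' + s * d i' j') i = v i + s * (a i j * c i) := by
      intro s i
      have hterm : ∀ j', a i j' * (X i j' + s * d i j')
          = a i j' * X i j' + (if j' = j then s * (a i j * c i) else 0) := by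
        intro j'
        by_cases hj : j' = j
        · subst hj; simp [hddef]; ring
        · simp [hddef, hj]
      simp only [payoff, hterm, Finset.sum_add_distrib,
        Finset.sum_ite_eq' Finset.univ j (fun _ => s * (a i j * c i))]
      simp [← hXv, payoff]
    have hmemX : ∀ s : ℝ, |s| ≤ 1 → (fun i => v i + s * (a i j * c i)) ∈ IPS a := by
      intro s hs
      refine ⟨fun i' j' => X i' j' + s * d i' j', ⟨?_, ?_⟩, ?_⟩
      · intro i' j'
        show 0 ≤ X i' j' + s * d i' j'
        have hb : |s * d i' j'| ≤ X i' j' := by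
          rw [abs_mul]
          calc |s| * |d i' j'| ≤ 1 * |d i' j'| :=
                mul_le_mul_of_nonneg_right hs (abs_nonneg _)
            _ = |d i' j'| := one_mul _
            _ ≤ X i' j' := hdb i' j'
        have := neg_abs_le (s * d i' j')
        linarith
      · intro j'
        show ∑ i', (X i' j' + s * d i' j') = 1
        rw [Finset.sum_add_distrib, hX1 j', ← Finset.mul_sum, hdsum j']
        ring
      · funext i
        exact hpay s i
    have hp1 : (fun i => v i + 1 * (a i j * c i)) ∈ IPS a := hmemX 1 (by norm_num)
    have hp2 : (fun i => v i + (-1) * (a i j * c i)) ∈ IPS a := hmemX (-1) (by norm_num)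
    have hseg : v ∈ openSegment ℝ (fun i => v i + 1 * (a i j * c i))
        (fun i => v i + (-1) * (a i j * c i)) := by
      refine ⟨1/2, 1/2, by norm_num, by norm_num, by norm_num, ?_⟩
      funext i
      simp only [Pi.add_apply, Pi.smul_apply, smul_eq_mul]
      ring
    have heq1 := hext hp1 hp2 hseg
    have h1' : v i1 + 1 * (a i1 j * c i1) = v i1 := congrFun heq1 i1
    have h2' : v i2 + 1 * (a i2 j * c i2) = v i2 := congrFun heq1 i2
    have hc1 : c i1 = ε := by simp [hcdef]
    have hc2 : c i2 = -ε := by simp [hcdef, (Ne.symm hne : ¬ i2 = i1)]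
    rw [hc1] at h1'; rw [hc2] at h2'
    have ha1 : a i1 j * ε = 0 := by linarith
    have ha2 : a i2 j * ε = 0 := by nlinarith
    exact ⟨by nlinarith, by nlinarith⟩
  -- choose a positive entry in each column
  have hex : ∀ j, ∃ i, 0 < X i j := by
    intro j
    by_contra h
    push_neg at h
    have : ∑ i, X i j ≤ 0 := Finset.sum_nonpos (fun i _ => h i)
    rw [hX1 j] at this
    linarith
  choose i0 hi0 using hex
  refine ⟨fun i j => if i = i0 j then 1 else 0, ⟨?_, ?_⟩, ?_⟩
  · intro i j
    by_cases h : i = i0 j <;> simp [h]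
  · intro j
    simp
  · rw [← hXv]
    funext i
    apply Finset.sum_congr rfl
    intro j _
    show a i j * (if i = i0 j then 1 else 0) = a i j * X i j
    by_cases h : i = i0 j
    · rw [if_pos h, mul_one]
      by_cases hx : X i j = 1
      · rw [hx, mul_one]
      · have hsome : ∃ i2, i2 ≠ i ∧ 0 < X i2 j := by
          by_contra hcon
          push_neg at hcon
          apply hx
          have hsg := Finset.sum_eq_single_of_mem i (Finset.mem_univ i)
            (fun b _ hb => le_antisymm (hcon b hb) (hX0 b j))
          rw [hX1 j] at hsg
          exact hsg.symm
        obtain ⟨i2, hne, hpos⟩ := hsome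
        have hpos1 : 0 < X i j := h ▸ hi0 j
        have := (key j i i2 (Ne.symm hne) hpos1 hpos).1
        rw [this]; ring
    · rw [if_neg h, mul_zero]
      by_cases hx : X i j = 0
      · rw [hx, mul_zero]
      · have hpos : 0 < X i j := lt_of_le_of_ne (hX0 i j) (Ne.symm hx)
        have := (key j i (i0 j) h hpos (hi0 j)).1
        rw [this]; ring
end

section
/- Under mutual absolute continuity (all a_{ij} > 0), the maxmin allocation X* ∈ argmax_X min_i a_i(X) is equitable: a_1(X*) = a_2(X*) = a_3(X*). -/
theorem maxmin_is_equitable (m : ℕ) (a : Fin 3 → Fin m → ℝ)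
    (ha : ∀ i j, 0 < a i j) (hrow : ∀ i, ∑ j, a i j = 1)
    (Xs : Fin 3 → Fin m → ℝ) (hXs : IsAlloc Xs)
    (hmax : ∀ X : Fin 3 → Fin m → ℝ, IsAlloc X →
      min (min (payoff a X 0) (payoff a X 1)) (payoff a X 2) ≤
        min (min (payoff a Xs 0) (payoff a Xs 1)) (payoff a Xs 2)) :
    payoff a Xs 0 = payoff a Xs 1 ∧ payoff a Xs 1 = payoff a Xs 2 := by
  set p : Fin 3 → ℝ := payoff a Xs with hp
  set v : ℝ := min (min (p 0) (p 1)) (p 2) with hv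
  have hvle : ∀ i : Fin 3, v ≤ p i := by
    intro i
    fin_cases i
    · exact le_trans (min_le_left _ _) (min_le_left _ _)
    · exact le_trans (min_le_left _ _) (min_le_right _ _)
    · exact min_le_right _ _
  have key : ∀ k : Fin 3, p k ≤ v := by
    intro k
    by_contra hlt
    push_neg at hlt
    have hp0 : ∀ i, 0 ≤ p i := by
      intro i
      apply Finset.sum_nonneg
      intro j _
      exact mul_nonneg (le_of_lt (ha i j)) (hXs.1 i j)
    have hv0 : 0 ≤ v := le_min (le_min (hp0 0) (hp0 1)) (hp0 2)
    have hpk : 0 < p k := lt_of_le_of_lt hv0 hlt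
    obtain ⟨j, _, hj⟩ : ∃ j ∈ Finset.univ, 0 < a k j * Xs k j := by
      by_contra h
      push_neg at h
      have : p k ≤ 0 := Finset.sum_nonpos (fun j hj => h j hj)
      linarith
    have hXkj : 0 < Xs k j := by
      rcases lt_or_ge 0 (Xs k j) with h | h
      · exact h
      · have : a k j * Xs k j ≤ 0 := mul_nonpos_of_nonneg_of_nonpos (le_of_lt (ha k j)) h
        linarith
    set ε : ℝ := min (Xs k j / 2) ((p k - v) / (4 * a k j)) with hε
    have hεa : 0 < (p k - v) / (4 * a k j) := by
      apply div_pos (by linarith)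
      have := ha k j; linarith
    have hε0 : 0 < ε := lt_min (by linarith) hεa
    have hε1 : ε ≤ Xs k j / 2 := min_le_left _ _
    have hε2 : ε * (4 * a k j) ≤ p k - v := by
      have h4 : 0 < 4 * a k j := by have := ha k j; linarith
      calc ε * (4 * a k j) ≤ ((p k - v) / (4 * a k j)) * (4 * a k j) := by
            apply mul_le_mul_of_nonneg_right (min_le_right _ _) (le_of_lt h4)
        _ = p k - v := div_mul_cancel₀ _ (ne_of_gt h4)
    set d : Fin 3 → ℝ := fun i => if i = k then -(2*ε) else ε with hd
    set X' : Fin 3 → Fin m → ℝ := fun i j' => Xs i j' + (if j' = j then d i else 0) with hX'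
    have hAlloc : IsAlloc X' := by
      constructor
      · intro i j'
        by_cases hij : j' = j
        · by_cases hik : i = k
          · simp [X', d, hij, hik]
            linarith
          · simp [X', d, hij, hik]
            have := hXs.1 i j
            linarith
        · simp only [X', if_neg hij, add_zero]
          exact hXs.1 i j'
      · intro j'
        have hsplit : ∑ i, X' i j' = (∑ i, Xs i j') + ∑ i, (if j' = j then d i else 0) := by
          simp [X', Finset.sum_add_distrib]
        rw [hsplit, hXs.2 j']
        have hsum : ∑ i : Fin 3, d i = 0 := by
          rw [Fin.sum_univ_three]
          fin_cases k <;> simp [d] <;> ring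
        by_cases hj' : j' = j
        · simp [hj', hsum]
        · simp [hj']
    have hpay : ∀ i, payoff a X' i = p i + a i j * d i := by
      intro i
      show (∑ j', a i j' * X' i j') = p i + a i j * d i
      have : ∀ j', a i j' * X' i j'
          = a i j' * Xs i j' + (if j' = j then a i j' * d i else 0) := by
        intro j'
        by_cases hj' : j' = j <;> simp [X', hj', mul_add]
      rw [Finset.sum_congr rfl (fun j' _ => this j'), Finset.sum_add_distrib,
        Finset.sum_ite_eq' Finset.univ j (fun j' => a i j' * d i)]
      simp [hp, payoff]
    have hmin : ∀ i, v < payoff a X' i := by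
      intro i
      rw [hpay i]
      by_cases hik : i = k
      · simp only [hik, d, if_pos rfl]
        nlinarith [hε2, hlt]
      · simp only [d, if_neg hik]
        have hpos : 0 < a i j * ε := mul_pos (ha i j) hε0
        have := hvle i
        linarith
    have hle := hmax X' hAlloc
    have h0 := hmin 0
    have h1 := hmin 1
    have h2 := hmin 2
    have : v < min (min (payoff a X' 0) (payoff a X' 1)) (payoff a X' 2) :=
      lt_min (lt_min h0 h1) h2
    linarith
  have e0 : p 0 = v := le_antisymm (key 0) (hvle 0)
  have e1 : p 1 = v := le_antisymm (key 1) (hvle 1)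
  have e2 : p 2 = v := le_antisymm (key 2) (hvle 2)
  exact ⟨e0.trans e1.symm, e1.trans e2.symm⟩
end

section
/- Under mutual absolute continuity, a maxmin allocation is Pareto optimal: there is no allocation X' with a_i(X') ≥ a_i(X*) for all i with a strict inequality for some i. -/
theorem maxmin_is_pareto_optimal (m : ℕ) (a : Fin 3 → Fin m → ℝ)
    (ha : ∀ i j, 0 < a i j) (hrow : ∀ i, ∑ j, a i j = 1)
    (Xs : Fin 3 → Fin m → ℝ) (hXs : IsAlloc Xs)
    (hmax : ∀ X : Fin 3 → Fin m → ℝ, IsAlloc X →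
      min (min (payoff a X 0) (payoff a X 1)) (payoff a X 2) ≤
        min (min (payoff a Xs 0) (payoff a Xs 1)) (payoff a Xs 2)) :
    ¬ ∃ X' : Fin 3 → Fin m → ℝ, IsAlloc X' ∧
      (∀ i, payoff a Xs i ≤ payoff a X' i) ∧ ∃ i, payoff a Xs i < payoff a X' i := by
  rintro ⟨X', ⟨hX'nn, hX'col⟩, hge, i0, hlt⟩
  obtain ⟨hXsnn, hXscol⟩ := hXs
  have hXs0 : 0 ≤ payoff a Xs i0 :=
    Finset.sum_nonneg fun j _ => mul_nonneg (ha i0 j).le (hXsnn i0 j)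
  have hpos : 0 < payoff a X' i0 := lt_of_le_of_lt hXs0 hlt
  obtain ⟨j, hj⟩ : ∃ j, 0 < a i0 j * X' i0 j := by
    by_contra h
    push_neg at h
    have : payoff a X' i0 ≤ 0 := Finset.sum_nonpos fun j _ => h j
    linarith
  have hXj : 0 < X' i0 j := by
    by_contra h
    push_neg at h
    nlinarith [ha i0 j]
  set δ : ℝ := payoff a X' i0 - payoff a Xs i0 with hδdef
  have hδ : 0 < δ := by simp [hδdef]; linarith
  set ε : ℝ := min (X' i0 j) (δ / (2 * a i0 j)) with hεdef
  have hε : 0 < ε := lt_min hXj (div_pos hδ (mul_pos two_pos (ha i0 j)))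
  have hεle : ε ≤ X' i0 j := min_le_left _ _
  have hεle2 : a i0 j * ε ≤ δ / 2 := by
    have h1 : ε ≤ δ / (2 * a i0 j) := min_le_right _ _
    have h2 : a i0 j * ε ≤ a i0 j * (δ / (2 * a i0 j)) :=
      mul_le_mul_of_nonneg_left h1 (ha i0 j).le
    have hane : a i0 j ≠ 0 := (ha i0 j).ne'
    have h3 : a i0 j * (δ / (2 * a i0 j)) = δ / 2 := by
      field_simp
    linarith
  set X'' : Fin 3 → Fin m → ℝ :=
    fun k l => X' k l + (if l = j then (if k = i0 then -ε else ε / 2) else 0) with hX''def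
  have halloc : IsAlloc X'' := by
    constructor
    · intro k l
      by_cases hl : l = j
      · by_cases hk : k = i0
        · have heq : X'' k l = X' i0 j + -ε := by simp [hX''def, hl, hk]
          rw [heq]; linarith
        · have heq : X'' k l = X' k l + ε / 2 := by simp [hX''def, hl, hk]
          rw [heq]
          have := hX'nn k l
          linarith
      · simp only [hX''def, if_neg hl]
        simpa using hX'nn k l
    · intro l
      by_cases hl : l = j
      · have hsum : ∑ k : Fin 3, (if k = i0 then -ε else ε / 2) = 0 := by
          fin_cases i0 <;> simp [Fin.sum_univ_three] <;> ring
        have heq : ∑ k : Fin 3, X'' k l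
            = ∑ k : Fin 3, (X' k l + if k = i0 then -ε else ε / 2) := by
          refine Finset.sum_congr rfl fun k _ => ?_
          simp [hX''def, hl]
        rw [heq, Finset.sum_add_distrib, hX'col l, hsum]
        ring
      · simp only [hX''def, if_neg hl, add_zero]
        exact hX'col l
  have hpay : ∀ k, payoff a X'' k
      = payoff a X' k + a k j * (if k = i0 then -ε else ε / 2) := by
    intro k
    simp only [payoff, hX''def, mul_add, Finset.sum_add_distrib, mul_ite, mul_zero,
      Finset.sum_ite_eq' Finset.univ j, Finset.mem_univ, if_true]
  have hgt : ∀ k, payoff a Xs k < payoff a X'' k := by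
    intro k
    rw [hpay k]
    by_cases hk : k = i0
    · rw [if_pos hk, hk]
      have : payoff a X' i0 - payoff a Xs i0 = δ := by rw [hδdef]
      linarith
    · rw [if_neg hk]
      have h1 := mul_pos (ha k j) (half_pos hε)
      have h2 := hge k
      linarith
  have hc := hmax X'' halloc
  have A : min (min (payoff a Xs 0) (payoff a Xs 1)) (payoff a Xs 2) <
      min (min (payoff a X'' 0) (payoff a X'' 1)) (payoff a X'' 2) := by
    rw [lt_min_iff, lt_min_iff]
    have m0 : min (min (payoff a Xs 0) (payoff a Xs 1)) (payoff a Xs 2) ≤ payoff a Xs 0 :=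
      le_trans (min_le_left _ _) (min_le_left _ _)
    have m1 : min (min (payoff a Xs 0) (payoff a Xs 1)) (payoff a Xs 2) ≤ payoff a Xs 1 :=
      le_trans (min_le_left _ _) (min_le_right _ _)
    have m2 : min (min (payoff a Xs 0) (payoff a Xs 1)) (payoff a Xs 2) ≤ payoff a Xs 2 :=
      min_le_right _ _
    exact ⟨⟨lt_of_le_of_lt m0 (hgt 0), lt_of_le_of_lt m1 (hgt 1)⟩,
      lt_of_le_of_lt m2 (hgt 2)⟩
  linarith
end

section
/- Under MAC, if γ ∈ ℝ³ has all strictly positive coordinates and X is an allocation such that x_{ik} > 0 implies γ_i a_{ik} ≥ γ_j a_{jk} for all players j, then X is Pareto optimal. -/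
theorem gamma_rule_is_pareto_optimal (m : ℕ) (a : Fin 3 → Fin m → ℝ)
    (ha : ∀ i j, 0 < a i j) (hrow : ∀ i, ∑ j, a i j = 1)
    (γ : Fin 3 → ℝ) (hγ : ∀ i, 0 < γ i)
    (X : Fin 3 → Fin m → ℝ) (hX : IsAlloc X)
    (hrule : ∀ i k, 0 < X i k → ∀ j, γ j * a j k ≤ γ i * a i k) :
    ¬ ∃ X' : Fin 3 → Fin m → ℝ, IsAlloc X' ∧
      (∀ i, payoff a X i ≤ payoff a X' i) ∧ ∃ i, payoff a X i < payoff a X' i := by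
  rintro ⟨X', ⟨hX'nn, hX'col⟩, hge, i₀, hgt⟩
  obtain ⟨hXnn, hXcol⟩ := hX
  -- for each good k, there is a column-max value c k
  have key : ∀ k : Fin m, ∃ c : ℝ, (∀ j, γ j * a j k ≤ c) ∧
      ∑ i, γ i * (a i k * X i k) = c := by
    intro k
    -- some player gets a positive share of good k
    have hpos : ∃ i, 0 < X i k := by
      by_contra h
      push_neg at h
      have : ∑ i, X i k = 0 := by
        apply Finset.sum_eq_zero
        intro i _
        exact le_antisymm (h i) (hXnn i k)
      rw [hXcol k] at this; norm_num at this
    obtain ⟨i, hi⟩ := hpos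
    refine ⟨γ i * a i k, hrule i k hi, ?_⟩
    have hterm : ∀ j : Fin 3, γ j * (a j k * X j k) = (γ i * a i k) * X j k := by
      intro j
      rcases eq_or_lt_of_le (hXnn j k) with h0 | h0
      · rw [← h0]; ring
      · have h1 := hrule i k hi j
        have h2 := hrule j k h0 i
        have : γ j * a j k = γ i * a i k := le_antisymm h1 h2
        rw [← this]; ring
    calc ∑ j, γ j * (a j k * X j k) = ∑ j, (γ i * a i k) * X j k := by
          exact Finset.sum_congr rfl fun j _ => hterm j
      _ = (γ i * a i k) * ∑ j, X j k := by rw [Finset.mul_sum]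
      _ = γ i * a i k := by rw [hXcol k, mul_one]
  choose c hcmax hceq using key
  -- weighted welfare of X equals ∑ c k
  have hWX : ∑ i, γ i * payoff a X i = ∑ k, c k := by
    simp only [payoff, Finset.mul_sum]
    rw [Finset.sum_comm]
    exact Finset.sum_congr rfl fun k _ => hceq k
  -- weighted welfare of X' is at most ∑ c k
  have hWX' : ∑ i, γ i * payoff a X' i ≤ ∑ k, c k := by
    simp only [payoff, Finset.mul_sum]
    rw [Finset.sum_comm]
    apply Finset.sum_le_sum
    intro k _
    calc ∑ i, γ i * (a i k * X' i k) ≤ ∑ i, c k * X' i k := by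
          apply Finset.sum_le_sum
          intro i _
          have := hcmax k i
          have h3 : γ i * (a i k * X' i k) = (γ i * a i k) * X' i k := by ring
          rw [h3]
          exact mul_le_mul_of_nonneg_right this (hX'nn i k)
      _ = c k * ∑ i, X' i k := by rw [Finset.mul_sum]
      _ = c k := by rw [hX'col k, mul_one]
  -- but the Pareto improvement strictly increases the weighted welfare
  have hstrict : ∑ i, γ i * payoff a X i < ∑ i, γ i * payoff a X' i := by
    apply Finset.sum_lt_sum
    · intro i _
      exact mul_le_mul_of_nonneg_left (hge i) (hγ i).le
    · exact ⟨i₀, Finset.mem_univ i₀, mul_lt_mul_of_pos_left hgt (hγ i₀)⟩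
  rw [hWX] at hstrict
  exact absurd hWX' (not_le.mpr hstrict)
end

section
/- For γ in the open 2-simplex, the hyperplane H(γ) = {x ∈ ℝ³ : ∑_i γ_i x_i = g(γ)}, where g(γ) = ∑_i γ_i a_i(X^γ) and X^γ is an allocation satisfying x_{ik} > 0 ⟹ γ_i a_{ik} ≥ γ_j a_{jk}, supports IPS at a(X^γ): that is, ∑_i γ_i y_i ≤ g(γ) for every y ∈ IPS. -/
theorem hyperplane_supports_IPS (m : ℕ) (a : Fin 3 → Fin m → ℝ)
    (ha : ∀ i j, 0 < a i j) (hrow : ∀ i, ∑ j, a i j = 1)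
    (γ : Fin 3 → ℝ) (hγpos : ∀ i, 0 < γ i) (hγsum : ∑ i, γ i = 1)
    (X : Fin 3 → Fin m → ℝ) (hX : IsAlloc X)
    (hrule : ∀ i k, 0 < X i k → ∀ j, γ j * a j k ≤ γ i * a i k) :
    ∀ y ∈ IPS a, ∑ i, γ i * y i ≤ ∑ i, γ i * payoff a X i := by
  rintro y ⟨Y, hY, rfl⟩
  -- rewrite both sides as sums over goods
  have swap : ∀ Z : Fin 3 → Fin m → ℝ,
      ∑ i, γ i * payoff a Z i = ∑ k, ∑ i, γ i * a i k * Z i k := by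
    intro Z
    rw [Finset.sum_comm]
    simp [payoff, Finset.mul_sum, mul_assoc]
  rw [swap, swap]
  apply Finset.sum_le_sum
  intro k _
  -- pick i0 with X i0 k > 0
  obtain ⟨i0, hi0⟩ : ∃ i, 0 < X i k := by
    by_contra h
    push_neg at h
    have : ∑ i, X i k = 0 := Finset.sum_eq_zero fun i _ =>
      le_antisymm (h i) (hX.1 i k)
    rw [hX.2 k] at this; norm_num at this
  set c := γ i0 * a i0 k with hc
  have hmax : ∀ j, γ j * a j k ≤ c := hrule i0 k hi0
  have hYle : ∑ i, γ i * a i k * Y i k ≤ c := by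
    calc ∑ i, γ i * a i k * Y i k ≤ ∑ i, c * Y i k := by
          apply Finset.sum_le_sum
          intro i _
          exact mul_le_mul_of_nonneg_right (hmax i) (hY.1 i k)
      _ = c * ∑ i, Y i k := by rw [Finset.mul_sum]
      _ = c := by rw [hY.2 k, mul_one]
  have hXeq : ∑ i, γ i * a i k * X i k = c := by
    have : ∀ i, γ i * a i k * X i k = c * X i k := by
      intro i
      rcases lt_or_eq_of_le (hX.1 i k) with h | h
      · rw [le_antisymm (hmax i) (hrule i k h i0)]
      · rw [← h]; ring
    calc ∑ i, γ i * a i k * X i k = ∑ i, c * X i k :=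
          Finset.sum_congr rfl fun i _ => this i
      _ = c * ∑ i, X i k := by rw [Finset.mul_sum]
      _ = c := by rw [hX.2 k, mul_one]
  rw [hXeq]; exact hYle
end

section
/- If all goods ℓ in a set K satisfy γ_i a_{iℓ} = γ_j a_{jℓ}, then any point on the segment [a(X_i^K), a(X_j^K)] can be achieved by an allocation that splits at most one good of K between players i and j, assigning every other good of K entirely to i or to j. -/
lemma clamp_mul_aux (x p a : ℝ) (ha : 0 < a) :
    min 1 (max 0 ((x - p)/a)) * a = min x (p+a) - min x p := by
  rcases le_total x p with h | h
  · have h1 : (x-p)/a ≤ 0 := div_nonpos_of_nonpos_of_nonneg (by linarith) ha.le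
    rw [max_eq_left h1, min_eq_right zero_le_one, zero_mul,
        min_eq_left (by linarith), min_eq_left h]
    ring
  · rcases le_total x (p+a) with h2 | h2
    · have h0 : 0 ≤ (x-p)/a := div_nonneg (by linarith) ha.le
      have h1 : (x-p)/a ≤ 1 := by rw [div_le_one ha]; linarith
      rw [max_eq_right h0, min_eq_right h1, div_mul_cancel₀ _ ha.ne',
          min_eq_left h2, min_eq_right h]
    · have h1 : 1 ≤ (x-p)/a := by rw [le_div_iff₀ ha]; linarith
      have h0 : (0:ℝ) ≤ (x-p)/a := by linarith
      rw [max_eq_right h0, min_eq_left h1, one_mul,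
          min_eq_right h2, min_eq_right h]
      ring

theorem segment_point_splits_at_most_one_good (r : ℕ)
    (ai aj : Fin r → ℝ)
    (hai : ∀ ℓ, 0 < ai ℓ) (haj : ∀ ℓ, 0 < aj ℓ)
    (γi γj : ℝ) (hγi : 0 < γi) (hγj : 0 < γj)
    (hdisp : ∀ ℓ, γi * ai ℓ = γj * aj ℓ)
    (c : Fin 3 → ℝ) :
    ∀ p ∈ segment ℝ (c + ![∑ ℓ, ai ℓ, 0, 0]) (c + ![0, ∑ ℓ, aj ℓ, 0]),
      ∃ s : Fin r → ℝ,  -- s ℓ is the fraction of good ℓ given to player i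
        (∀ ℓ, 0 ≤ s ℓ ∧ s ℓ ≤ 1) ∧
        {ℓ : Fin r | s ℓ ≠ 0 ∧ s ℓ ≠ 1}.ncard ≤ 1 ∧
        p = c + ![∑ ℓ, s ℓ * ai ℓ, ∑ ℓ, (1 - s ℓ) * aj ℓ, 0] := by
  rintro p ⟨u, v, hu, hv, huv, rfl⟩
  -- extend ai to ℕ
  set b : ℕ → ℝ := fun m => if h : m < r then ai ⟨m, h⟩ else 0 with hb
  have hbnonneg : ∀ m, 0 ≤ b m := by
    intro m; simp only [hb]; split
    · exact (hai _).le
    · exact le_rfl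
  set P : ℕ → ℝ := fun n => ∑ m ∈ Finset.range n, b m with hP
  have hPmono : Monotone P := by
    intro m n hmn
    exact Finset.sum_le_sum_of_subset_of_nonneg (Finset.range_subset_range.mpr hmn)
      (fun i _ _ => hbnonneg i)
  set T : ℝ := ∑ ℓ, ai ℓ with hT
  set Tj : ℝ := ∑ ℓ, aj ℓ with hTj
  have hTnonneg : 0 ≤ T := Finset.sum_nonneg fun ℓ _ => (hai ℓ).le
  have hPr : P r = T := by
    show ∑ m ∈ Finset.range r, b m = T
    rw [hT, ← Fin.sum_univ_eq_sum_range b r]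
    exact Finset.sum_congr rfl fun ℓ _ => by simp [hb]
  set x : ℝ := u * T with hx
  have hx0 : 0 ≤ x := mul_nonneg hu hTnonneg
  have hxT : x ≤ T := by nlinarith
  set s : Fin r → ℝ := fun ℓ => min 1 (max 0 ((x - P ℓ)/ai ℓ)) with hs
  have hs01 : ∀ ℓ, 0 ≤ s ℓ ∧ s ℓ ≤ 1 := by
    intro ℓ
    constructor
    · exact le_min zero_le_one (le_max_left _ _)
    · exact min_le_left _ _
  have hPsucc : ∀ ℓ : Fin r, P ((ℓ : ℕ) + 1) = P ℓ + ai ℓ := by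
    intro ℓ
    show ∑ m ∈ Finset.range ((ℓ:ℕ)+1), b m = ∑ m ∈ Finset.range (ℓ:ℕ), b m + ai ℓ
    rw [Finset.sum_range_succ]
    simp [hb, ℓ.isLt]
  have hterm : ∀ ℓ : Fin r, s ℓ * ai ℓ = min x (P ((ℓ:ℕ)+1)) - min x (P ℓ) := by
    intro ℓ
    rw [hPsucc ℓ]
    exact clamp_mul_aux x (P ℓ) (ai ℓ) (hai ℓ)
  have hsum : ∑ ℓ, s ℓ * ai ℓ = x := by
    calc ∑ ℓ, s ℓ * ai ℓ
        = ∑ ℓ : Fin r, (min x (P ((ℓ:ℕ)+1)) - min x (P ℓ)) :=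
          Finset.sum_congr rfl fun ℓ _ => hterm ℓ
      _ = ∑ m ∈ Finset.range r, (min x (P (m+1)) - min x (P m)) :=
          Fin.sum_univ_eq_sum_range (fun m => min x (P (m+1)) - min x (P m)) r
      _ = min x (P r) - min x (P 0) := Finset.sum_range_sub (fun m => min x (P m)) r
      _ = x := by
          have hP0 : P 0 = 0 := by show ∑ m ∈ Finset.range 0, b m = 0; simp
          rw [hPr, min_eq_left hxT, hP0, min_eq_right hx0, sub_zero]
  -- relation between ai and aj
  have haij : ∀ ℓ, aj ℓ = (γi / γj) * ai ℓ := by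
    intro ℓ
    field_simp
    linarith [hdisp ℓ]
  have hTT : Tj = (γi / γj) * T := by
    rw [hTj, hT, Finset.mul_sum]
    exact Finset.sum_congr rfl fun ℓ _ => haij ℓ
  have hsumj : ∑ ℓ, (1 - s ℓ) * aj ℓ = v * Tj := by
    have : ∑ ℓ, (1 - s ℓ) * aj ℓ = Tj - (γi/γj) * ∑ ℓ, s ℓ * ai ℓ := by
      rw [hTj, Finset.mul_sum, ← Finset.sum_sub_distrib]
      apply Finset.sum_congr rfl
      intro ℓ _
      rw [haij ℓ]; ring
    rw [this, hsum, hx, hTT]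
    have hv1 : v = 1 - u := by linarith
    rw [hv1]; ring
  refine ⟨s, hs01, ?_, ?_⟩
  · -- at most one fractional good
    have hsub : {ℓ : Fin r | s ℓ ≠ 0 ∧ s ℓ ≠ 1}.Subsingleton := by
      intro ℓ hℓ ℓ' hℓ'
      have key : ∀ m : Fin r, s m ≠ 0 → s m ≠ 1 → P m < x ∧ x < P ((m:ℕ)+1) := by
        intro m h0 h1
        constructor
        · by_contra hc
          push_neg at hc
          apply h0
          rw [hs]
          have : (x - P m)/ai m ≤ 0 :=
            div_nonpos_of_nonpos_of_nonneg (by linarith) (hai m).le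
          simp only
          rw [max_eq_left this, min_eq_right zero_le_one]
        · by_contra hc
          push_neg at hc
          rw [hPsucc m] at hc
          apply h1
          rw [hs]
          have h1' : 1 ≤ (x - P m)/ai m := by
            rw [le_div_iff₀ (hai m)]; linarith
          have h0' : (0:ℝ) ≤ (x - P m)/ai m := by linarith
          simp only
          rw [max_eq_right h0', min_eq_left h1']
      obtain ⟨hl1, hl2⟩ := key ℓ hℓ.1 hℓ.2
      obtain ⟨hl1', hl2'⟩ := key ℓ' hℓ'.1 hℓ'.2
      by_contra hne
      rcases lt_or_gt_of_ne (Fin.val_ne_of_ne hne) with h | h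
      · have : P ((ℓ:ℕ)+1) ≤ P ℓ' := hPmono h
        linarith
      · have : P ((ℓ':ℕ)+1) ≤ P ℓ := hPmono h
        linarith
    rcases hsub.eq_empty_or_singleton with h | ⟨a, h⟩ <;> simp [h]
  · -- the point equation
    rw [hsum, hsumj]
    have hAB : ∀ (A B : Fin 3 → ℝ), u • (c + A) + v • (c + B) = c + (u • A + v • B) := by
      intro A B; funext k
      simp only [Pi.add_apply, Pi.smul_apply, smul_eq_mul]
      linear_combination (c k) * huv
    rw [hAB]
    congr 1
    funext k
    fin_cases k <;> simp [hx]
end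

section
/- For two goods with normalized evaluation vectors p, q in the open 2-simplex, the supporting segments of p and q (segments joining each point to the three vertices of the simplex) intersect in exactly one point if and only if neither p nor q lies on a supporting segment of the other. -/
/-- The `i`-th vertex of the 2-simplex in ℝ³. -/
noncomputable def vert (i : Fin 3) : Fin 3 → ℝ := Pi.single i 1

/-- Two points of the simplex are support independent if neither lies on a
supporting segment (segment joining the point to a vertex) of the other. -/
def SIndep (p q : Fin 3 → ℝ) : Prop :=
  (∀ i, p ∉ segment ℝ q (vert i)) ∧ ∀ i, q ∉ segment ℝ p (vert i)

lemma vert_apply (i m : Fin 3) : vert i m = if m = i then 1 else 0 := by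
  simp [vert, Pi.single_apply]

lemma param_iff (p z : Fin 3 → ℝ) (i : Fin 3) (t : ℝ) :
    z = (1 - t) • p + t • vert i ↔
      ∀ m, z m = (1 - t) * p m + (if m = i then t else 0) := by
  rw [funext_iff]
  refine forall_congr' fun m => ?_
  simp [vert_apply, mul_ite]

lemma mem_os_iff (p : Fin 3 → ℝ) (i : Fin 3) (z : Fin 3 → ℝ) :
    z ∈ openSegment ℝ p (vert i) ↔
      ∃ t : ℝ, 0 < t ∧ t < 1 ∧ ∀ m, z m = (1 - t) * p m + (if m = i then t else 0) := by
  rw [openSegment_eq_image, Set.mem_image]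
  constructor
  · rintro ⟨t, ht, rfl⟩
    exact ⟨t, ht.1, ht.2, (param_iff p _ i t).mp rfl⟩
  · rintro ⟨t, ht0, ht1, hz⟩
    exact ⟨t, ⟨ht0, ht1⟩, ((param_iff p z i t).mpr hz).symm⟩


lemma mem_seg_iff (p : Fin 3 → ℝ) (i : Fin 3) (z : Fin 3 → ℝ) :
    z ∈ segment ℝ p (vert i) ↔
      ∃ t : ℝ, 0 ≤ t ∧ t ≤ 1 ∧ ∀ m, z m = (1 - t) * p m + (if m = i then t else 0) := by
  rw [segment_eq_image, Set.mem_image]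
  constructor
  · rintro ⟨t, ht, rfl⟩
    exact ⟨t, ht.1, ht.2, (param_iff p _ i t).mp rfl⟩
  · rintro ⟨t, ht0, ht1, hz⟩
    exact ⟨t, ⟨ht0, ht1⟩, ((param_iff p z i t).mpr hz).symm⟩

lemma fin3_cover {i j k : Fin 3} (hij : i ≠ j) (hik : i ≠ k) (hjk : j ≠ k) (m : Fin 3) :
    m = i ∨ m = j ∨ m = k := by
  simp only [Ne, Fin.ext_iff] at *
  omega

lemma sum3 {p : Fin 3 → ℝ} (h : ∑ m, p m = 1) {i j k : Fin 3}
    (hij : i ≠ j) (hik : i ≠ k) (hjk : j ≠ k) : p i + p j + p k = 1 := by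
  fin_cases i <;> fin_cases j <;> fin_cases k <;>
    simp_all [Fin.sum_univ_three] <;> linarith

lemma cross_ineqs {pI pJ pK qI qJ qK t s : ℝ}
    (hpK : 0 < pK) (hqK : 0 < qK)
    (ht0 : 0 < t) (ht1 : t < 1) (hs0 : 0 < s) (hs1 : s < 1)
    (Ek : (1 - t) * pK = (1 - s) * qK)
    (Ei : (1 - t) * pI + t = (1 - s) * qI)
    (Ej : (1 - t) * pJ = (1 - s) * qJ + s) :
    pI * qK < pK * qI ∧ pK * qJ < pJ * qK := by
  have key1 : (1 - s) * (qI * pK - qK * pI) = t * pK := by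
    linear_combination pI * Ek - pK * Ei
  have key2 : (1 - t) * (pJ * qK - pK * qJ) = s * qK := by
    linear_combination qK * Ej - qJ * Ek
  constructor
  · have hX : 0 < qI * pK - qK * pI := by
      by_contra h
      push_neg at h
      nlinarith [mul_pos ht0 hpK]
    linarith [hX]
  · have hX : 0 < pJ * qK - pK * qJ := by
      by_contra h
      push_neg at h
      nlinarith [mul_pos hs0 hqK]
    linarith [hX]

/-- From a point in the intersection of two cross open segments, derive the
ratio inequalities. -/
lemma cross_case {p q : Fin 3 → ℝ} {i' j' k' : Fin 3}
    (h1 : i' ≠ j') (h2 : i' ≠ k') (h3 : j' ≠ k')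
    (hpK : 0 < p k') (hqK : 0 < q k') {t s : ℝ}
    (ht0 : 0 < t) (ht1 : t < 1) (hs0 : 0 < s) (hs1 : s < 1)
    (E : ∀ m, (1 - t) * p m + (if m = i' then t else 0)
        = (1 - s) * q m + (if m = j' then s else 0)) :
    p i' * q k' < p k' * q i' ∧ p k' * q j' < p j' * q k' := by
  have Ek := E k'
  rw [if_neg (Ne.symm h2), if_neg (Ne.symm h3), add_zero, add_zero] at Ek
  have Ei := E i'
  rw [if_pos rfl, if_neg h1, add_zero] at Ei
  have Ej := E j'
  rw [if_neg (Ne.symm h1), if_pos rfl, add_zero] at Ej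
  exact cross_ineqs hpK hqK ht0 ht1 hs0 hs1 Ek Ei Ej
lemma pair_unique {pI pK qI qK a b a' b' : ℝ} (hqK : 0 < qK)
    (h1 : pI * qK < pK * qI)
    (Ek : a * pK = b * qK) (Ei : a * pI + (1 - a) = b * qI)
    (Ek' : a' * pK = b' * qK) (Ei' : a' * pI + (1 - a') = b' * qI) :
    a = a' ∧ b = b' := by
  have key : (a - a') * (pK * qI - pI * qK + qK) = 0 := by
    linear_combination qI * Ek - qI * Ek' - qK * Ei + qK * Ei'
  have hpos : 0 < pK * qI - pI * qK + qK := by linarith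
  have ha : a = a' := by
    rcases mul_eq_zero.mp key with h | h
    · linarith
    · linarith
  refine ⟨ha, ?_⟩
  rw [ha] at Ek
  have : b * qK = b' * qK := by linarith [Ek, Ek']
  exact mul_right_cancel₀ (ne_of_gt hqK) this

lemma same_vertex_contra {pA pB qA qB c d : ℝ} (hc : 0 < c) (hd0 : 0 < d)
    (e1 : c * pA = d * qA) (e2 : c * pB = d * qB) (hne : pA * qB ≠ pB * qA) : False := by
  apply hne
  have h : c * d * (pA * qB - pB * qA) = 0 := by
    linear_combination d * qB * e1 - d * qA * e2
  have hcd : c * d ≠ 0 := ne_of_gt (mul_pos hc hd0)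
  have := (mul_eq_zero.mp h).resolve_left hcd
  linarith

lemma rho_trans {pa pb pc qa qb qc : ℝ} (hqa : 0 < qa) (hqb : 0 < qb) (hqc : 0 < qc)
    (h1 : pa * qb < pb * qa) (h2 : pb * qc < pc * qb) : pa * qc < pc * qa := by
  have h3 : pa * qc * qb < pc * qa * qb := by
    nlinarith [mul_lt_mul_of_pos_right h1 hqc, mul_lt_mul_of_pos_right h2 hqa]
  exact lt_of_mul_lt_mul_right h3 hqb.le

lemma exists_unique_of_order (p q : Fin 3 → ℝ)
    (hp0 : ∀ m, 0 < p m) (hp1 : ∑ m, p m = 1)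
    (hq0 : ∀ m, 0 < q m) (hq1 : ∑ m, q m = 1)
    (i j k : Fin 3) (hij : i ≠ j) (hik : i ≠ k) (hjk : j ≠ k)
    (h1 : p i * q k < p k * q i)
    (h2 : p k * q j < p j * q k)
    (hd : ∀ a b : Fin 3, a ≠ b → p a * q b ≠ p b * q a) :
    ∃! z, z ∈ (⋃ i, openSegment ℝ p (vert i)) ∩ ⋃ i, openSegment ℝ q (vert i) := by
  have hps : p i + p j + p k = 1 := sum3 hp1 hij hik hjk
  have hqs : q i + q j + q k = 1 := sum3 hq1 hij hik hjk
  have hij' : p i * q j < p j * q i := rho_trans (hq0 i) (hq0 k) (hq0 j) h1 h2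
  set D : ℝ := q k * (1 - p i) + p k * q i with hD
  have hpi1 : p i < 1 := by linarith [hp0 j, hp0 k]
  have hD0 : 0 < D := by
    have h1' : 0 < q k * (1 - p i) := mul_pos (hq0 k) (by linarith)
    have h2' : 0 < p k * q i := mul_pos (hp0 k) (hq0 i)
    rw [hD]; linarith
  set a : ℝ := q k / D with ha_def
  set b : ℝ := p k / D with hb_def
  have ha0 : 0 < a := div_pos (hq0 k) hD0
  have hb0 : 0 < b := div_pos (hp0 k) hD0
  have ha1 : a < 1 := by
    rw [ha_def, div_lt_one hD0, hD]
    nlinarith [h1]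
  have hb1 : b < 1 := by
    rw [hb_def, div_lt_one hD0, hD]
    nlinarith [h2, mul_comm (p k) (q i), hps, hqs,
      congrArg (fun x => p k * x) hqs, congrArg (fun x => q k * x) hps]
  -- the constructed intersection point
  have hEk : a * p k = b * q k := by rw [ha_def, hb_def]; ring
  have hEi : a * p i + (1 - a) = b * q i := by
    rw [ha_def, hb_def]
    field_simp
    rw [hD]; ring
  have hEj : a * p j = b * q j + (1 - b) := by
    rw [ha_def, hb_def]
    field_simp
    rw [hD]
    linear_combination (q k) * hps - (p k) * hqs
  refine ⟨fun m => a * p m + (if m = i then 1 - a else 0), ⟨?_, ?_⟩, ?_⟩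
  · refine Set.mem_iUnion.2 ⟨i, (mem_os_iff p i _).2 ⟨1 - a, by linarith, by linarith, fun m => ?_⟩⟩
    split_ifs <;> ring
  · refine Set.mem_iUnion.2 ⟨j, (mem_os_iff q j _).2 ⟨1 - b, by linarith, by linarith, fun m => ?_⟩⟩
    rcases fin3_cover hij hik hjk m with rfl | rfl | rfl
    · rw [if_pos rfl, if_neg hij]
      simpa using hEi
    · rw [if_neg hij.symm, if_pos rfl]
      simpa using hEj
    · rw [if_neg hik.symm, if_neg hjk.symm]
      simpa using hEk
  · rintro z' ⟨hz1, hz2⟩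
    obtain ⟨i', hi'⟩ := Set.mem_iUnion.1 hz1
    obtain ⟨j', hj'⟩ := Set.mem_iUnion.1 hz2
    obtain ⟨t', ht'0, ht'1, hzp⟩ := (mem_os_iff p i' z').1 hi'
    obtain ⟨s', hs'0, hs'1, hzq⟩ := (mem_os_iff q j' z').1 hj'
    have E : ∀ m, (1 - t') * p m + (if m = i' then t' else 0)
        = (1 - s') * q m + (if m = j' then s' else 0) :=
      fun m => (hzp m).symm.trans (hzq m)
    have hii : i' = i ∧ j' = j := by
      rcases eq_or_ne i' j' with rfl | hne
      · -- same vertex : contradiction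
        exfalso
        obtain ⟨A, B, hAi, hBi, hAB⟩ : ∃ A B : Fin 3, A ≠ i' ∧ B ≠ i' ∧ A ≠ B := by
          rcases fin3_cover hij hik hjk i' with rfl | rfl | rfl
          · exact ⟨j, k, Ne.symm hij, Ne.symm hik, hjk⟩
          · exact ⟨i, k, hij, Ne.symm hjk, hik⟩
          · exact ⟨i, j, hik, hjk, hij⟩
        have eA := E A
        rw [if_neg hAi, if_neg hAi, add_zero, add_zero] at eA
        have eB := E B
        rw [if_neg hBi, if_neg hBi, add_zero, add_zero] at eB
        exact same_vertex_contra (by linarith : (0:ℝ) < 1 - t') (by linarith : (0:ℝ) < 1 - s')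
          eA eB (hd A B hAB)
      · -- cross case
        obtain ⟨k', hik', hjk'⟩ : ∃ k' : Fin 3, i' ≠ k' ∧ j' ≠ k' := by
          have H : ∀ a b : Fin 3, a ≠ b → ∃ c : Fin 3, a ≠ c ∧ b ≠ c := by decide
          exact H i' j' hne
        obtain ⟨c1, c2⟩ := cross_case hne hik' hjk' (hp0 k') (hq0 k') ht'0 ht'1 hs'0 hs'1 E
        -- identify (i', j', k') with (i, j, k)
        rcases fin3_cover hij hik hjk i' with rfl | rfl | rfl <;>
          rcases fin3_cover hij hik hjk j' with rfl | rfl | rfl <;>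
          rcases fin3_cover hij hik hjk k' with rfl | rfl | rfl <;>
            first
              | exact ⟨rfl, rfl⟩
              | (exact absurd rfl hne)
              | (exact absurd rfl hik')
              | (exact absurd rfl hjk')
              | (exact absurd rfl hij)
              | (exact absurd rfl hik)
              | (exact absurd rfl hjk)
              | (exact absurd rfl (Ne.symm hij))
              | (exact absurd rfl (Ne.symm hik))
              | (exact absurd rfl (Ne.symm hjk))
              | linarith [c1, c2, h1, h2, hij']
    obtain ⟨e1, e2⟩ := hii
    rw [e1] at hzp
    rw [e1, e2] at E
    -- pin down t', s'
    have Ek' := E k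
    rw [if_neg (Ne.symm hik), if_neg (Ne.symm hjk), add_zero, add_zero] at Ek'
    have Ei' := E i
    rw [if_pos rfl, if_neg hij, add_zero] at Ei'
    have hab : a = 1 - t' ∧ b = 1 - s' := by
      refine pair_unique (hq0 k) h1 hEk hEi Ek' ?_
      linear_combination Ei'
    have ht : t' = 1 - a := by linarith [hab.1]
    funext m
    rw [hzp m, ht]
    split_ifs <;> ring
lemma collinear_mem (p q : Fin 3 → ℝ) (a b c : Fin 3)
    (hca : c ≠ a) (hcb : c ≠ b) (hab : a ≠ b)
    (hps : p c + p a + p b = 1) (hqs : q c + q a + q b = 1)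
    (lam : ℝ) (hl0 : 0 < lam) (hl1 : lam ≤ 1)
    (ha : p a = lam * q a) (hb : p b = lam * q b) :
    p ∈ segment ℝ q (vert c) := by
  refine (mem_seg_iff q c p).mpr ⟨1 - lam, by linarith, by linarith, fun m => ?_⟩
  rcases fin3_cover hca hcb hab m with rfl | rfl | rfl
  · rw [if_pos rfl]
    linear_combination hps - ha - hb - lam * hqs
  · rw [if_neg (Ne.symm hca), add_zero]
    linear_combination ha
  · rw [if_neg (Ne.symm hcb), add_zero]
    linear_combination hb

lemma sIndep_cross (p q : Fin 3 → ℝ)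
    (hp0 : ∀ m, 0 < p m) (hp1 : ∑ m, p m = 1)
    (hq0 : ∀ m, 0 < q m) (hq1 : ∑ m, q m = 1)
    (hs : SIndep p q) :
    ∀ a b : Fin 3, a ≠ b → p a * q b ≠ p b * q a := by
  intro a b hab heq
  obtain ⟨c, hca, hcb⟩ : ∃ c : Fin 3, c ≠ a ∧ c ≠ b := by
    have H : ∀ a b : Fin 3, a ≠ b → ∃ c : Fin 3, c ≠ a ∧ c ≠ b := by decide
    exact H a b hab
  have hps : p c + p a + p b = 1 := sum3 hp1 hca hcb hab
  have hqs : q c + q a + q b = 1 := sum3 hq1 hca hcb hab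
  rcases le_or_gt (p a) (q a) with hle | hlt
  · -- lam = p a / q a ≤ 1 : p ∈ segment q (vert c)
    refine hs.1 c (collinear_mem p q a b c hca hcb hab hps hqs (p a / q a)
      (div_pos (hp0 a) (hq0 a)) (div_le_one_of_le₀ hle (hq0 a).le) ?_ ?_)
    · exact (div_mul_cancel₀ _ (ne_of_gt (hq0 a))).symm
    · rw [div_mul_eq_mul_div, eq_div_iff (ne_of_gt (hq0 a))]
      linarith [heq]
  · -- q ∈ segment p (vert c)
    refine hs.2 c (collinear_mem q p a b c hca hcb hab hqs hps (q a / p a)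
      (div_pos (hq0 a) (hp0 a)) (div_le_one_of_le₀ hlt.le (hp0 a).le) ?_ ?_)
    · exact (div_mul_cancel₀ _ (ne_of_gt (hp0 a))).symm
    · rw [div_mul_eq_mul_div, eq_div_iff (ne_of_gt (hp0 a))]
      linarith [heq]

lemma two_points (p q : Fin 3 → ℝ) (hp0 : ∀ m, 0 < p m)
    (hne : p ≠ q) (i : Fin 3) (hmem : p ∈ segment ℝ q (vert i)) :
    ¬ ∃! z, z ∈ (⋃ i, openSegment ℝ p (vert i)) ∩ ⋃ i, openSegment ℝ q (vert i) := by
  obtain ⟨t, ht0, ht1, hpt⟩ := (mem_seg_iff q i p).mp hmem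
  obtain ⟨jj, hjne⟩ : ∃ jj : Fin 3, jj ≠ i := exists_ne i
  have ht1' : t < 1 := by
    rcases lt_or_eq_of_le ht1 with h | h
    · exact h
    · exfalso
      have := hpt jj
      rw [if_neg hjne, ← h] at this
      simp at this
      linarith [hp0 jj, this]
  have ht0' : 0 < t := by
    rcases lt_or_eq_of_le ht0 with h | h
    · exact h
    · exfalso
      apply hne
      funext m
      have := hpt m
      rw [← h] at this
      simpa using this
  rintro ⟨z, -, huniq⟩
  have key : ∀ u : ℝ, 0 < u → u < 1 →
      (fun m => (1 - u) * p m + if m = i then u else 0) ∈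
        (⋃ i, openSegment ℝ p (vert i)) ∩ ⋃ i, openSegment ℝ q (vert i) := by
    intro u hu0 hu1
    constructor
    · exact Set.mem_iUnion.2 ⟨i, (mem_os_iff p i _).2 ⟨u, hu0, hu1, fun m => rfl⟩⟩
    · refine Set.mem_iUnion.2 ⟨i, (mem_os_iff q i _).2
        ⟨u + t - u * t, by nlinarith, by nlinarith, fun m => ?_⟩⟩
      rw [hpt m]
      split_ifs <;> ring
  have e1 := huniq _ (key (1/3) (by norm_num) (by norm_num))
  have e2 := huniq _ (key (2/3) (by norm_num) (by norm_num))
  have := congrFun (e1.trans e2.symm) jj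
  simp only [if_neg hjne] at this
  have hpj := hp0 jj
  nlinarith [this]

theorem supporting_segments_unique_intersection_iff_sIndep
    (p q : Fin 3 → ℝ)
    (hp : (∀ i, 0 < p i) ∧ ∑ i, p i = 1)
    (hq : (∀ i, 0 < q i) ∧ ∑ i, q i = 1)
    (hpq : p ≠ q) :
    (∃! z, z ∈ (⋃ i, openSegment ℝ p (vert i)) ∩ ⋃ i, openSegment ℝ q (vert i)) ↔
      SIndep p q := by
  obtain ⟨hp0, hp1⟩ := hp
  obtain ⟨hq0, hq1⟩ := hq
  constructor
  · intro h
    by_contra hns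
    rw [SIndep, not_and_or] at hns
    rcases hns with hns | hns <;> push_neg at hns <;> obtain ⟨i, hi⟩ := hns
    · exact two_points p q hp0 hpq i hi h
    · rw [Set.inter_comm] at h
      exact two_points q p hq0 (Ne.symm hpq) i hi h
  · intro hs
    have hd : ∀ a b : Fin 3, a ≠ b → p a * q b ≠ p b * q a :=
      sIndep_cross p q hp0 hp1 hq0 hq1 hs
    rcases lt_trichotomy (p 0 * q 1) (p 1 * q 0) with h01 | h01 | h01
    · rcases lt_trichotomy (p 1 * q 2) (p 2 * q 1) with h12 | h12 | h12
      · exact exists_unique_of_order p q hp0 hp1 hq0 hq1 0 2 1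
          (by decide) (by decide) (by decide) h01 h12 hd
      · exact absurd h12 (hd 1 2 (by decide))
      · rcases lt_trichotomy (p 0 * q 2) (p 2 * q 0) with h02 | h02 | h02
        · exact exists_unique_of_order p q hp0 hp1 hq0 hq1 0 1 2
            (by decide) (by decide) (by decide) h02 h12 hd
        · exact absurd h02 (hd 0 2 (by decide))
        · exact exists_unique_of_order p q hp0 hp1 hq0 hq1 2 1 0
            (by decide) (by decide) (by decide) h02 h01 hd
    · exact absurd h01 (hd 0 1 (by decide))
    · rcases lt_trichotomy (p 1 * q 2) (p 2 * q 1) with h12 | h12 | h12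
      · rcases lt_trichotomy (p 0 * q 2) (p 2 * q 0) with h02 | h02 | h02
        · exact exists_unique_of_order p q hp0 hp1 hq0 hq1 1 2 0
            (by decide) (by decide) (by decide) h01 h02 hd
        · exact absurd h02 (hd 0 2 (by decide))
        · exact exists_unique_of_order p q hp0 hp1 hq0 hq1 1 0 2
            (by decide) (by decide) (by decide) h12 h02 hd
      · exact absurd h12 (hd 1 2 (by decide))
      · exact exists_unique_of_order p q hp0 hp1 hq0 hq1 2 0 1
          (by decide) (by decide) (by decide) h12 h01 hd
end

section
/- Under MAC, every Pareto optimal allocation value can be achieved by an allocation in which either (a) no good is split, or (b) exactly one good is split (among at most three players), or (c) exactly two goods are split, each between exactly two players. -/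
/-- Good `j` is not split in `X`: every player gets share 0 or 1 of it. -/
def Unsplit {m : ℕ} (X : Fin 3 → Fin m → ℝ) (j : Fin m) : Prop :=
  ∀ i, X i j = 0 ∨ X i j = 1

open Classical in
noncomputable def fracCount {m : ℕ} (Y : Fin 3 → Fin m → ℝ) : ℕ :=
  (Finset.univ.filter fun p : Fin 3 × Fin m => 0 < Y p.1 p.2 ∧ Y p.1 p.2 < 1).card

lemma payoff_add {m : ℕ} (a Y D : Fin 3 → Fin m → ℝ) (t : ℝ) :
    payoff a (fun i j => Y i j + t * D i j)
      = fun i => payoff a Y i + t * ∑ j, a i j * D i j := by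
  funext i
  simp only [payoff, mul_add, Finset.sum_add_distrib, Finset.mul_sum]
  congr 1
  exact Finset.sum_congr rfl fun j _ => by ring

lemma perturb {m : ℕ} (Y : Fin 3 → Fin m → ℝ) (hY : IsAlloc Y)
    (D : Fin 3 → Fin m → ℝ) (hD0 : ∀ j, ∑ i, D i j = 0)
    (hsupp : ∀ i j, D i j ≠ 0 → 0 < Y i j ∧ Y i j < 1) :
    ∃ ε > 0, ∀ t : ℝ, |t| ≤ ε → IsAlloc (fun i j => Y i j + t * D i j) := by
  classical
  set P := Finset.univ.filter (fun p : Fin 3 × Fin m => D p.1 p.2 ≠ 0) with hP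
  set g : Fin 3 × Fin m → ℝ := fun p => Y p.1 p.2 / |D p.1 p.2| with hg
  set T := insert (1:ℝ) (P.image g) with hT
  have hTne : T.Nonempty := ⟨1, Finset.mem_insert_self _ _⟩
  refine ⟨T.min' hTne, ?_, ?_⟩
  · have hpos : ∀ x ∈ T, 0 < x := by
      intro x hx
      rw [hT, Finset.mem_insert] at hx
      rcases hx with h | h
      · rw [h]; norm_num
      · rw [Finset.mem_image] at h
        obtain ⟨p, hp, hgp⟩ := h
        rw [hP, Finset.mem_filter] at hp
        have h1 := (hsupp p.1 p.2 hp.2).1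
        have h2 : 0 < |D p.1 p.2| := abs_pos.mpr hp.2
        rw [← hgp]
        exact div_pos h1 h2
    exact hpos _ (T.min'_mem hTne)
  · intro t ht
    constructor
    · intro i j
      show (0:ℝ) ≤ Y i j + t * D i j
      by_cases hD : D i j = 0
      · simp only [hD, mul_zero, add_zero]; exact hY.1 i j
      · have hfr := hsupp i j hD
        have hmem : g (i, j) ∈ T := by
          rw [hT, Finset.mem_insert, Finset.mem_image]
          exact Or.inr ⟨(i, j), by rw [hP, Finset.mem_filter]; exact ⟨Finset.mem_univ _, hD⟩, rfl⟩
        have h1 : T.min' hTne ≤ Y i j / |D i j| := T.min'_le _ hmem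
        have h2 : 0 < |D i j| := abs_pos.mpr hD
        have h3 : |t * D i j| ≤ Y i j := by
          rw [abs_mul]
          calc |t| * |D i j| ≤ (Y i j / |D i j|) * |D i j| := by
                apply mul_le_mul (ht.trans h1) le_rfl (abs_nonneg _)
                exact le_trans (abs_nonneg t) (ht.trans h1)
            _ = Y i j := div_mul_cancel₀ _ (ne_of_gt h2)
        have := neg_abs_le (t * D i j)
        linarith
    · intro j
      show ∑ i, (Y i j + t * D i j) = 1
      rw [Finset.sum_add_distrib, hY.2 j, ← Finset.mul_sum, hD0 j]
      ring

lemma key_lemma {m : ℕ} (a X : Fin 3 → Fin m → ℝ)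
    (hPO : ¬ ∃ X' : Fin 3 → Fin m → ℝ, IsAlloc X' ∧
      (∀ i, payoff a X i ≤ payoff a X' i) ∧ ∃ i, payoff a X i < payoff a X' i)
    (Y : Fin 3 → Fin m → ℝ) (hY : IsAlloc Y) (hpay : payoff a Y = payoff a X)
    (hmin : ∀ Y', IsAlloc Y' → payoff a Y' = payoff a X → fracCount Y ≤ fracCount Y')
    (D : Fin 3 → Fin m → ℝ) (hD0 : ∀ j, ∑ i, D i j = 0)
    (hsupp : ∀ i j, D i j ≠ 0 → 0 < Y i j ∧ Y i j < 1)
    (i0 : Fin 3) (hi : ∀ i, i ≠ i0 → ∑ j, a i j * D i j = 0)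
    (p₀ : Fin 3 × Fin m) (hDne : D p₀.1 p₀.2 ≠ 0) : False := by
  classical
  set v : ℝ := ∑ j, a i0 j * D i0 j with hv
  by_cases hv0 : v = 0
  · -- all directional payoffs vanish: push to the boundary and reduce fracCount
    have hvall : ∀ i, ∑ j, a i j * D i j = 0 := by
      intro i
      by_cases h : i = i0
      · rw [h, ← hv]; exact hv0
      · exact hi i h
    set P := Finset.univ.filter (fun p : Fin 3 × Fin m => D p.1 p.2 ≠ 0) with hP
    have hp₀P : p₀ ∈ P := by rw [hP, Finset.mem_filter]; exact ⟨Finset.mem_univ _, hDne⟩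
    set bnd : Fin 3 × Fin m → ℝ := fun p =>
      if 0 < D p.1 p.2 then (1 - Y p.1 p.2) / D p.1 p.2 else Y p.1 p.2 / (-D p.1 p.2) with hbnd
    obtain ⟨q₀, hq₀P, hq₀min⟩ := P.exists_min_image bnd ⟨p₀, hp₀P⟩
    have hbndpos : ∀ p ∈ P, 0 < bnd p := by
      intro p hp
      rw [hP, Finset.mem_filter] at hp
      have hfr := hsupp p.1 p.2 hp.2
      simp only [hbnd]
      by_cases hs : 0 < D p.1 p.2
      · rw [if_pos hs]; exact div_pos (by linarith [hfr.2]) hs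
      · rw [if_neg hs]
        have : D p.1 p.2 < 0 := lt_of_le_of_ne (not_lt.mp hs) hp.2
        exact div_pos hfr.1 (by linarith)
    set t := bnd q₀ with ht
    have htpos : 0 < t := hbndpos q₀ hq₀P
    set Y' : Fin 3 → Fin m → ℝ := fun i j => Y i j + t * D i j with hY'
    have hY'alloc : IsAlloc Y' := by
      constructor
      · intro i j
        show (0:ℝ) ≤ Y i j + t * D i j
        by_cases hD : D i j = 0
        · rw [hD]; simpa using hY.1 i j
        · have hfr := hsupp i j hD
          have hmem : (i, j) ∈ P := by rw [hP, Finset.mem_filter]; exact ⟨Finset.mem_univ _, hD⟩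
          have hle : t ≤ bnd (i, j) := hq₀min (i, j) hmem
          by_cases hs : 0 < D i j
          · nlinarith
          · have hneg : D i j < 0 := lt_of_le_of_ne (not_lt.mp hs) hD
            rw [hbnd] at hle; simp only [if_neg hs] at hle
            have : t * (-D i j) ≤ Y i j := by
              rw [← div_mul_cancel₀ (Y i j) (show -D i j ≠ 0 by linarith)]
              exact mul_le_mul_of_nonneg_right hle (by linarith)
            nlinarith
      · intro j
        show ∑ i, (Y i j + t * D i j) = 1
        rw [Finset.sum_add_distrib, hY.2 j, ← Finset.mul_sum, hD0 j]; ring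
    have hY'pay : payoff a Y' = payoff a X := by
      rw [hY', payoff_add, ← hpay]
      funext i
      rw [hvall i]; ring
    -- fracCount strictly decreases
    have hsub : (Finset.univ.filter fun p : Fin 3 × Fin m => 0 < Y' p.1 p.2 ∧ Y' p.1 p.2 < 1)
        ⊂ (Finset.univ.filter fun p : Fin 3 × Fin m => 0 < Y p.1 p.2 ∧ Y p.1 p.2 < 1) := by
      constructor
      · intro p hp
        rw [Finset.mem_filter] at hp ⊢
        refine ⟨Finset.mem_univ _, ?_⟩
        by_cases hD : D p.1 p.2 = 0
        · have : Y' p.1 p.2 = Y p.1 p.2 := by rw [hY']; simp [hD]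
          rw [this] at hp; exact hp.2
        · exact hsupp p.1 p.2 hD
      · intro hcon
        have hq₀frac : (0 < Y q₀.1 q₀.2 ∧ Y q₀.1 q₀.2 < 1) := by
          rw [hP, Finset.mem_filter] at hq₀P
          exact hsupp q₀.1 q₀.2 hq₀P.2
        have hq₀D : D q₀.1 q₀.2 ≠ 0 := by
          rw [hP, Finset.mem_filter] at hq₀P; exact hq₀P.2
        have hmem : q₀ ∈ Finset.univ.filter
            (fun p : Fin 3 × Fin m => 0 < Y p.1 p.2 ∧ Y p.1 p.2 < 1) := by
          rw [Finset.mem_filter]; exact ⟨Finset.mem_univ _, hq₀frac⟩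
        have hmem' := hcon hmem
        rw [Finset.mem_filter] at hmem'
        have hval : Y' q₀.1 q₀.2 = 0 ∨ Y' q₀.1 q₀.2 = 1 := by
          rw [hY']
          by_cases hs : 0 < D q₀.1 q₀.2
          · right
            show Y q₀.1 q₀.2 + t * D q₀.1 q₀.2 = 1
            rw [ht, hbnd]; simp only [if_pos hs]
            field_simp
            ring
          · left
            have hneg : D q₀.1 q₀.2 < 0 := lt_of_le_of_ne (not_lt.mp hs) hq₀D
            show Y q₀.1 q₀.2 + t * D q₀.1 q₀.2 = 0
            rw [ht, hbnd]; simp only [if_neg hs]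
            rw [div_neg, neg_mul, div_mul_cancel₀ _ hq₀D]
            ring
        rcases hval with h | h
        · rw [h] at hmem'; exact lt_irrefl 0 hmem'.2.1
        · rw [h] at hmem'; exact lt_irrefl 1 hmem'.2.2
    have hlt : fracCount Y' < fracCount Y := by
      unfold fracCount
      exact Finset.card_lt_card (by convert hsub)
    exact absurd (hmin Y' hY'alloc hY'pay) (not_le.mpr hlt)
  · -- can strictly improve player i0: contradicts Pareto optimality
    obtain ⟨ε, hε, hfeas⟩ := perturb Y hY D hD0 hsupp
    set t := if 0 < v then ε else -ε with htdef
    have htv : 0 < t * v := by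
      rw [htdef]
      by_cases h : 0 < v
      · rw [if_pos h]; exact mul_pos hε h
      · rw [if_neg h]
        have : v < 0 := lt_of_le_of_ne (not_lt.mp h) hv0
        nlinarith
    have habs : |t| ≤ ε := by
      rw [htdef]; by_cases h : 0 < v <;> simp [h, abs_of_pos hε, le_refl, abs_neg]
    apply hPO
    refine ⟨fun i j => Y i j + t * D i j, hfeas t habs, ?_, i0, ?_⟩
    · intro i
      rw [payoff_add, ← hpay]
      show payoff a Y i ≤ payoff a Y i + t * ∑ j, a i j * D i j
      by_cases h : i = i0
      · subst h; rw [← hv]; linarith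
      · rw [hi i h]; simp
    · rw [payoff_add, ← hpay]
      show payoff a Y i0 < payoff a Y i0 + t * ∑ j, a i0 j * D i0 j
      rw [← hv]; linarith
lemma sum_ite_pair {α : Type*} [Fintype α] [DecidableEq α] {j k : α} (h : j ≠ k)
    (u v : ℝ) : ∑ x, (if x = j then u else if x = k then v else 0) = u + v := by
  have he : ∀ x : α, (if x = j then u else if x = k then v else 0)
      = (if x = j then u else 0) + (if x = k then v else 0) := by
    intro x; split_ifs with h1 h2 <;> simp_all
  simp [he, Finset.sum_add_distrib, Finset.sum_ite_eq']

lemma sum_ite_triple {α : Type*} [Fintype α] [DecidableEq α] {j k l : α}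
    (h1 : j ≠ k) (h2 : j ≠ l) (h3 : k ≠ l) (u v w : ℝ) :
    ∑ x, (if x = j then u else if x = k then v else if x = l then w else 0) = u + v + w := by
  have he : ∀ x : α, (if x = j then u else if x = k then v else if x = l then w else 0)
      = (if x = j then u else 0) + (if x = k then v else 0) + (if x = l then w else 0) := by
    intro x; split_ifs <;> simp_all
  simp [he, Finset.sum_add_distrib, Finset.sum_ite_eq', add_assoc]

lemma fin3_mem (p q r x : Fin 3) (hpq : p ≠ q) (hpr : p ≠ r) (hqr : q ≠ r) :
    x = p ∨ x = q ∨ x = r := by revert p q r x; decide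

lemma fin3_third (p q : Fin 3) : ∃ r, r ≠ p ∧ r ≠ q := by revert p q; decide

lemma pair_contra {m : ℕ} (a X : Fin 3 → Fin m → ℝ) (ha : ∀ i j, 0 < a i j)
    (hPO : ¬ ∃ X' : Fin 3 → Fin m → ℝ, IsAlloc X' ∧
      (∀ i, payoff a X i ≤ payoff a X' i) ∧ ∃ i, payoff a X i < payoff a X' i)
    (Y : Fin 3 → Fin m → ℝ) (hY : IsAlloc Y) (hpay : payoff a Y = payoff a X)
    (hmin : ∀ Y', IsAlloc Y' → payoff a Y' = payoff a X → fracCount Y ≤ fracCount Y')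
    (j k : Fin m) (hjk : j ≠ k) (p q : Fin 3) (hpq : p ≠ q)
    (h1 : 0 < Y p j ∧ Y p j < 1) (h2 : 0 < Y q j ∧ Y q j < 1)
    (h3 : 0 < Y p k ∧ Y p k < 1) (h4 : 0 < Y q k ∧ Y q k < 1) : False := by
  classical
  set D : Fin 3 → Fin m → ℝ := fun i j' =>
    if j' = j then (if i = p then -(a p k) else if i = q then a p k else 0)
    else if j' = k then (if i = p then a p j else if i = q then -(a p j) else 0)
    else 0 with hD
  have hval : ∀ i j', a i j' * D i j' =
      (if j' = j then a i j * (if i = p then -(a p k) else if i = q then a p k else 0)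
       else if j' = k then a i k * (if i = p then a p j else if i = q then -(a p j) else 0)
       else 0) := by
    intro i j'
    rw [hD]
    split_ifs with hj hk <;> simp_all
  have hD0 : ∀ j', ∑ i, D i j' = 0 := by
    intro j'
    rw [hD]
    by_cases hj : j' = j
    · simp only [hj, eq_self_iff_true, if_true]
      rw [sum_ite_pair hpq]; ring
    · by_cases hk : j' = k
      · simp only [hk, if_neg (show ¬(k = j) from fun h => hjk h.symm), eq_self_iff_true, if_true]
        rw [sum_ite_pair hpq]; ring
      · simp [hj, hk]
  have hsupp : ∀ i j', D i j' ≠ 0 → 0 < Y i j' ∧ Y i j' < 1 := by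
    intro i j' hne
    simp only [hD] at hne
    split_ifs at hne with hj hip hiq hk hip' hiq'
    · rw [hj, hip]; exact h1
    · rw [hj, hiq]; exact h2
    · exact absurd rfl hne
    · rw [hk, hip']; exact h3
    · rw [hk, hiq']; exact h4
    · exact absurd rfl hne
    · exact absurd rfl hne
  have hvsum : ∀ i, ∑ j', a i j' * D i j' =
      a i j * (if i = p then -(a p k) else if i = q then a p k else 0)
      + a i k * (if i = p then a p j else if i = q then -(a p j) else 0) := by
    intro i
    simp_rw [hval]
    exact sum_ite_pair hjk _ _
  have hip : ∀ i, i ≠ q → ∑ j', a i j' * D i j' = 0 := by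
    intro i hiq
    rw [hvsum]
    by_cases hp : i = p
    · subst hp; simp only [eq_self_iff_true, if_true]; ring
    · simp only [if_neg hp, if_neg hiq]; ring
  have hDv : D p j = -(a p k) := by simp [hD]
  have hDne : D p j ≠ 0 := by
    intro hcon
    rw [hDv] at hcon
    exact absurd (neg_eq_zero.mp hcon) (ne_of_gt (ha p k))
  exact key_lemma a X hPO Y hY hpay hmin D hD0 hsupp q hip (p, j) hDne

lemma triangle_contra {m : ℕ} (a X : Fin 3 → Fin m → ℝ) (ha : ∀ i j, 0 < a i j)
    (hPO : ¬ ∃ X' : Fin 3 → Fin m → ℝ, IsAlloc X' ∧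
      (∀ i, payoff a X i ≤ payoff a X' i) ∧ ∃ i, payoff a X i < payoff a X' i)
    (Y : Fin 3 → Fin m → ℝ) (hY : IsAlloc Y) (hpay : payoff a Y = payoff a X)
    (hmin : ∀ Y', IsAlloc Y' → payoff a Y' = payoff a X → fracCount Y ≤ fracCount Y')
    (j k l : Fin m) (hjk : j ≠ k) (hjl : j ≠ l) (hkl : k ≠ l)
    (p q r : Fin 3) (hpq : p ≠ q) (hpr : p ≠ r) (hqr : q ≠ r)
    (h1 : 0 < Y p j ∧ Y p j < 1) (h2 : 0 < Y q j ∧ Y q j < 1)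
    (h3 : 0 < Y q k ∧ Y q k < 1) (h4 : 0 < Y r k ∧ Y r k < 1)
    (h5 : 0 < Y r l ∧ Y r l < 1) (h6 : 0 < Y p l ∧ Y p l < 1) : False := by
  classical
  set c1 : ℝ := a q k * a r l with hc1
  set c2 : ℝ := a q j * a r l with hc2
  set c3 : ℝ := a q j * a r k with hc3
  have hc1pos : 0 < c1 := mul_pos (ha q k) (ha r l)
  set D : Fin 3 → Fin m → ℝ := fun i j' =>
    if j' = j then (if i = p then -c1 else if i = q then c1 else 0)
    else if j' = k then (if i = q then -c2 else if i = r then c2 else 0)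
    else if j' = l then (if i = r then -c3 else if i = p then c3 else 0)
    else 0 with hD
  have hval : ∀ i j', a i j' * D i j' =
      (if j' = j then a i j * (if i = p then -c1 else if i = q then c1 else 0)
       else if j' = k then a i k * (if i = q then -c2 else if i = r then c2 else 0)
       else if j' = l then a i l * (if i = r then -c3 else if i = p then c3 else 0)
       else 0) := by
    intro i j'
    rw [hD]
    by_cases hj : j' = j
    · simp only [hj, eq_self_iff_true, if_true]
    · by_cases hk : j' = k
      · simp only [hk, if_neg (show ¬(k = j) from fun h => hjk h.symm), eq_self_iff_true, if_true]
      · by_cases hl : j' = l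
        · simp only [hl, if_neg (show ¬(l = j) from fun h => hjl h.symm),
            if_neg (show ¬(l = k) from fun h => hkl h.symm), eq_self_iff_true, if_true]
        · simp [hj, hk, hl]
  have hD0 : ∀ j', ∑ i, D i j' = 0 := by
    intro j'
    rw [hD]
    by_cases hj : j' = j
    · simp only [hj, eq_self_iff_true, if_true]
      rw [sum_ite_pair hpq]; ring
    · by_cases hk : j' = k
      · simp only [hk, if_neg (show ¬(k = j) from fun h => hjk h.symm), eq_self_iff_true, if_true]
        rw [sum_ite_pair hqr]; ring
      · by_cases hl : j' = l
        · simp only [hl, if_neg (show ¬(l = j) from fun h => hjl h.symm),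
            if_neg (show ¬(l = k) from fun h => hkl h.symm), eq_self_iff_true, if_true]
          rw [sum_ite_pair (show r ≠ p from Ne.symm hpr)]; ring
        · simp [hj, hk, hl]
  have hsupp : ∀ i j', D i j' ≠ 0 → 0 < Y i j' ∧ Y i j' < 1 := by
    intro i j' hne
    simp only [hD] at hne
    split_ifs at hne with hj hip hiq hk hiq' hir hl hir' hip'
    · rw [hj, hip]; exact h1
    · rw [hj, hiq]; exact h2
    · exact absurd rfl hne
    · rw [hk, hiq']; exact h3
    · rw [hk, hir]; exact h4
    · exact absurd rfl hne
    · rw [hl, hir']; exact h5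
    · rw [hl, hip']; exact h6
    · exact absurd rfl hne
    · exact absurd rfl hne
  have hvsum : ∀ i, ∑ j', a i j' * D i j' =
      a i j * (if i = p then -c1 else if i = q then c1 else 0)
      + a i k * (if i = q then -c2 else if i = r then c2 else 0)
      + a i l * (if i = r then -c3 else if i = p then c3 else 0) := by
    intro i
    simp_rw [hval]
    exact sum_ite_triple hjk hjl hkl _ _ _
  have hip : ∀ i, i ≠ p → ∑ j', a i j' * D i j' = 0 := by
    intro i hip'
    rw [hvsum]
    rcases fin3_mem p q r i hpq hpr hqr with h | h | h
    · exact absurd h hip'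
    · subst h
      simp only [if_neg hpq.symm, eq_self_iff_true, if_true, if_neg hqr]
      rw [hc1, hc2]; ring
    · subst h
      simp only [if_neg hpr.symm, if_neg hqr.symm, eq_self_iff_true, if_true]
      rw [hc2, hc3]; ring
  have hDv : D p j = -c1 := by simp [hD]
  have hDne : D p j ≠ 0 := by
    intro hcon
    rw [hDv] at hcon
    exact absurd (neg_eq_zero.mp hcon) (ne_of_gt hc1pos)
  exact key_lemma a X hPO Y hY hpay hmin D hD0 hsupp p hip (p, j) hDne

lemma split_two {m : ℕ} (Y : Fin 3 → Fin m → ℝ) (hY : IsAlloc Y) (j : Fin m)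
    (h : ¬ Unsplit Y j) :
    ∃ p q : Fin 3, p ≠ q ∧ (0 < Y p j ∧ Y p j < 1) ∧ (0 < Y q j ∧ Y q j < 1) := by
  unfold Unsplit at h
  push_neg at h
  obtain ⟨i, hi0, hi1⟩ := h
  have hle1 : ∀ i' : Fin 3, Y i' j ≤ 1 := by
    intro i'
    calc Y i' j ≤ ∑ i'', Y i'' j :=
          Finset.single_le_sum (fun i'' _ => hY.1 i'' j) (Finset.mem_univ i')
      _ = 1 := hY.2 j
  have hfr : 0 < Y i j ∧ Y i j < 1 :=
    ⟨lt_of_le_of_ne (hY.1 i j) (Ne.symm hi0), lt_of_le_of_ne (hle1 i) hi1⟩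
  have hq : ∃ q, q ≠ i ∧ 0 < Y q j := by
    by_contra hc
    push_neg at hc
    have hz : ∀ q, q ≠ i → Y q j = 0 := fun q hqi =>
      le_antisymm (not_lt.mp fun h' => absurd h' (by simpa using hc q hqi)) (hY.1 q j)
    have hsum := Finset.sum_eq_single i (fun q _ hqi => hz q hqi)
      (fun h' => absurd (Finset.mem_univ i) h')
    exact hi1 (hsum ▸ hY.2 j)
  obtain ⟨q, hqi, hq0⟩ := hq
  have hsum2 : Y q j + Y i j ≤ 1 := by
    have hsub : ({q, i} : Finset (Fin 3)) ⊆ Finset.univ := Finset.subset_univ _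
    have := Finset.sum_le_sum_of_subset_of_nonneg hsub (fun x _ _ => hY.1 x j)
    rw [Finset.sum_pair hqi] at this
    rw [hY.2 j] at this
    exact this
  exact ⟨q, i, hqi, ⟨hq0, by linarith [hfr.1]⟩, hfr⟩

lemma ncard_le_two {S : Set (Fin 3)} (i0 : Fin 3) (h : i0 ∉ S) : S.ncard ≤ 2 := by
  have hsub : S ⊆ {i0}ᶜ := by
    intro x hx
    simp only [Set.mem_compl_iff, Set.mem_singleton_iff]
    rintro rfl; exact h hx
  have h1 := Set.ncard_le_ncard hsub (Set.toFinite _)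
  have hc : ({i0}ᶜ : Set (Fin 3)).ncard = 2 := by
    rw [Set.ncard_eq_toFinset_card']
    simp [Set.toFinset_compl, Set.toFinset_singleton, Finset.card_compl]
  omega

theorem pareto_optimal_few_splits (m : ℕ) (a : Fin 3 → Fin m → ℝ)
    (ha : ∀ i j, 0 < a i j) (hrow : ∀ i, ∑ j, a i j = 1)
    (X : Fin 3 → Fin m → ℝ) (hX : IsAlloc X)
    (hPO : ¬ ∃ X' : Fin 3 → Fin m → ℝ, IsAlloc X' ∧
      (∀ i, payoff a X i ≤ payoff a X' i) ∧ ∃ i, payoff a X i < payoff a X' i) :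
    ∃ X' : Fin 3 → Fin m → ℝ, IsAlloc X' ∧ payoff a X' = payoff a X ∧
      ( -- (a) no good is split
        (∀ j, Unsplit X' j) ∨
        -- (b) at most one good is split (among at most three players)
        (∃ j0, ∀ j, j ≠ j0 → Unsplit X' j) ∨
        -- (c) two goods are split, each between at most two players
        (∃ j0 j1, j0 ≠ j1 ∧ (∀ j, j ≠ j0 → j ≠ j1 → Unsplit X' j) ∧
          ∀ j, (j = j0 ∨ j = j1) →
            {i : Fin 3 | 0 < X' i j ∧ X' i j < 1}.ncard ≤ 2)) := by
  classical
  have hmem : fracCount X ∈ {n | ∃ Y, IsAlloc Y ∧ payoff a Y = payoff a X ∧ fracCount Y = n} :=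
    ⟨X, hX, rfl, rfl⟩
  obtain ⟨Y, hY, hpay, hcnt⟩ :=
    Nat.sInf_mem (⟨fracCount X, hmem⟩ :
      {n | ∃ Y, IsAlloc Y ∧ payoff a Y = payoff a X ∧ fracCount Y = n}.Nonempty)
  have hmin : ∀ Y', IsAlloc Y' → payoff a Y' = payoff a X → fracCount Y ≤ fracCount Y' := by
    intro Y' h1 h2
    rw [hcnt]
    exact Nat.sInf_le ⟨Y', h1, h2, rfl⟩
  by_cases hA : ∀ j, Unsplit Y j
  · exact ⟨Y, hY, hpay, Or.inl hA⟩
  push_neg at hA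
  obtain ⟨j0, hj0⟩ := hA
  by_cases hB : ∀ j, j ≠ j0 → Unsplit Y j
  · exact ⟨Y, hY, hpay, Or.inr (Or.inl ⟨j0, hB⟩)⟩
  push_neg at hB
  obtain ⟨j1, hj1ne, hj1⟩ := hB
  have pc : ∀ (jA jB : Fin m), jA ≠ jB → ∀ p q : Fin 3, p ≠ q →
      (0 < Y p jA ∧ Y p jA < 1) → (0 < Y q jA ∧ Y q jA < 1) →
      (0 < Y p jB ∧ Y p jB < 1) → (0 < Y q jB ∧ Y q jB < 1) → False :=
    fun jA jB hne p q hpq a1 a2 a3 a4 =>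
      pair_contra a X ha hPO Y hY hpay hmin jA jB hne p q hpq a1 a2 a3 a4
  have hncard : ∀ (jA jB : Fin m), jA ≠ jB → ¬Unsplit Y jB →
      ({i : Fin 3 | 0 < Y i jA ∧ Y i jA < 1}).ncard ≤ 2 := by
    intro jA jB hne hsB
    obtain ⟨p, q, hpq, hfp, hfq⟩ := split_two Y hY jB hsB
    by_contra hc
    have hall : ∀ i, 0 < Y i jA ∧ Y i jA < 1 := by
      intro i
      by_contra hni
      exact hc (ncard_le_two i hni)
    exact pc jA jB hne p q hpq (hall p) (hall q) hfp hfq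
  by_cases hC : ∀ j, j ≠ j0 → j ≠ j1 → Unsplit Y j
  · refine ⟨Y, hY, hpay, Or.inr (Or.inr ⟨j0, j1, Ne.symm hj1ne, hC, ?_⟩)⟩
    rintro j (rfl | rfl)
    · exact hncard j j1 (Ne.symm hj1ne) hj1
    · exact hncard j j0 hj1ne hj0
  exfalso
  push_neg at hC
  obtain ⟨j2, hj2ne0, hj2ne1, hj2⟩ := hC
  obtain ⟨p, q, hpq, hfp0, hfq0⟩ := split_two Y hY j0 hj0
  obtain ⟨r, hrp, hrq⟩ := fin3_third p q
  have step : ∀ jB, j0 ≠ jB → ¬Unsplit Y jB →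
      (0 < Y r jB ∧ Y r jB < 1) ∧ ∃ x, (x = p ∨ x = q) ∧ (0 < Y x jB ∧ Y x jB < 1) := by
    intro jB hne hsB
    obtain ⟨p1, q1, hp1q1, hf1, hf2⟩ := split_two Y hY jB hsB
    have hmem1 := fin3_mem p q r p1 hpq (Ne.symm hrp) (Ne.symm hrq)
    have hmem2 := fin3_mem p q r q1 hpq (Ne.symm hrp) (Ne.symm hrq)
    rcases hmem1 with rfl | rfl | rfl <;> rcases hmem2 with rfl | rfl | rfl
    · exact absurd rfl hp1q1
    · exact absurd (pc j0 jB hne p1 q1 hp1q1 hfp0 hfq0 hf1 hf2) not_false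
    · exact ⟨hf2, p1, Or.inl rfl, hf1⟩
    · exact absurd (pc j0 jB hne q1 p1 (Ne.symm hp1q1) hfp0 hfq0 hf2 hf1) not_false
    · exact absurd rfl hp1q1
    · exact ⟨hf2, p1, Or.inr rfl, hf1⟩
    · exact ⟨hf1, q1, Or.inl rfl, hf2⟩
    · exact ⟨hf1, q1, Or.inr rfl, hf2⟩
    · exact absurd rfl hp1q1
  obtain ⟨hfr1, x1, hx1, hfx1⟩ := step j1 (Ne.symm hj1ne) hj1
  obtain ⟨hfr2, x2, hx2, hfx2⟩ := step j2 (Ne.symm hj2ne0) hj2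
  have hx1r : x1 ≠ r := by
    rcases hx1 with rfl | rfl
    · exact Ne.symm hrp
    · exact Ne.symm hrq
  by_cases hx12 : x1 = x2
  · subst hx12
    exact pc j1 j2 (Ne.symm hj2ne1) x1 r hx1r hfx1 hfr1 hfx2 hfr2
  · rcases hx1 with rfl | rfl <;> rcases hx2 with rfl | rfl
    · exact absurd rfl hx12
    · -- x1 = p, x2 = q : goods j0 (p,q), j2 (q,r), j1 (r,p)
      exact triangle_contra a X ha hPO Y hY hpay hmin j0 j2 j1
        (Ne.symm hj2ne0) (Ne.symm hj1ne) hj2ne1 x1 x2 r hpq (Ne.symm hrp) (Ne.symm hrq)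
        hfp0 hfq0 hfx2 hfr2 hfr1 hfx1
    · -- x1 = q, x2 = p : goods j0 (p,q), j1 (q,r), j2 (r,p)
      exact triangle_contra a X ha hPO Y hY hpay hmin j0 j1 j2
        (Ne.symm hj1ne) (Ne.symm hj2ne0) (Ne.symm hj2ne1) x2 x1 r hpq (Ne.symm hrp) (Ne.symm hrq)
        hfp0 hfq0 hfx1 hfr1 hfr2 hfx2
    · exact absurd rfl hx12
end
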